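/- Given a system objective function φ : S → ℝ with structure vector v^φ ∈ ℝ^S defined by v^φ(x) = φ(x), there exist local information based utility functions c_i such that the resulting game is a potential game with potential function φ, if and only if for every player i the linear system T_i ξ = v^φ has a solution ξ ∈ ℝ^{(∏_{j∈N_i} S_j) ⊕ (∏_{j≠i} S_j)}. Moreover, if ξ_i = (ξ_i^1, ξ_i^2) is a solution for player i, then c_i(x) = ξ_i^1(x_{N_i}) defines such local information based utility functions. -/

import Mathlib

open Matrix

/-- The `W`-drawing matrix. -/
def drawing {n : ℕ} (S : Fin n → Type*) [∀ i, Fintype (S i)] [∀ i, DecidableEq (S i)]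
    (W : Finset (Fin n)) :
    Matrix ((j : {j : Fin n // j ∈ W}) → S j.1) ((j : Fin n) → S j) ℝ :=
  fun u x => if (fun j : {j : Fin n // j ∈ W} => x j.1) = u then 1 else 0

/-- The utility design matrix `T_i = [Γ_{N_i}ᵀ, Γ_{N\{i}}ᵀ]`. -/
def Tmat {n : ℕ} (S : Fin n → Type*) [∀ i, Fintype (S i)] [∀ i, DecidableEq (S i)]
    (U : Fin n → Finset (Fin n)) (i : Fin n) :
    Matrix ((j : Fin n) → S j)
      (((j : {j : Fin n // j ∈ insert i (U i)}) → S j.1) ⊕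
        ((j : {j : Fin n // j ∈ Finset.univ.erase i}) → S j.1)) ℝ :=
  Matrix.fromCols (drawing S (insert i (U i)))ᵀ (drawing S (Finset.univ.erase i))ᵀ

/-- `Λ_i`. -/
def Lmat {n : ℕ} (S : Fin n → Type*) [∀ i, Fintype (S i)] [∀ i, DecidableEq (S i)]
    (U : Fin n → Finset (Fin n)) (i : Fin n) :
    Matrix ((j : {j : Fin n // j ∈ insert i (U i)}) → S j.1)
      ((j : {j : Fin n // j ∈ U i}) → S j.1) ℝ :=
  fun x y =>
    if (fun j : {j : Fin n // j ∈ U i} => x ⟨j.1, Finset.mem_insert_of_mem j.2⟩) = y then 1 else 0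

/-- `Υ_i`. -/
def Umat {n : ℕ} (S : Fin n → Type*) [∀ i, Fintype (S i)] [∀ i, DecidableEq (S i)]
    (U : Fin n → Finset (Fin n)) (hU : ∀ i, i ∉ U i) (i : Fin n) :
    Matrix ((j : {j : Fin n // j ∈ Finset.univ.erase i}) → S j.1)
      ((j : {j : Fin n // j ∈ U i}) → S j.1) ℝ :=
  fun x y =>
    if (fun j : {j : Fin n // j ∈ U i} =>
        x ⟨j.1, Finset.mem_erase.mpr ⟨fun h => hU i (by simpa [h] using j.2), Finset.mem_univ _⟩⟩) = y
    then 1 else 0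

/-- `H_i = [Λ_i; -Υ_i]`. -/
def Hmat {n : ℕ} (S : Fin n → Type*) [∀ i, Fintype (S i)] [∀ i, DecidableEq (S i)]
    (U : Fin n → Finset (Fin n)) (hU : ∀ i, i ∉ U i) (i : Fin n) :
    Matrix (((j : {j : Fin n // j ∈ insert i (U i)}) → S j.1) ⊕
        ((j : {j : Fin n // j ∈ Finset.univ.erase i}) → S j.1))
      ((j : {j : Fin n // j ∈ U i}) → S j.1) ℝ :=
  Matrix.fromRows (Lmat S U i) (-(Umat S U hU i))

lemma Tmat_mulVec_apply {n : ℕ} (S : Fin n → Type*) [∀ i, Fintype (S i)]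
    [∀ i, DecidableEq (S i)] (U : Fin n → Finset (Fin n)) (i : Fin n)
    (ξ : (((j : {j : Fin n // j ∈ insert i (U i)}) → S j.1) ⊕
        ((j : {j : Fin n // j ∈ Finset.univ.erase i}) → S j.1)) → ℝ)
    (x : (j : Fin n) → S j) :
    (Tmat S U i *ᵥ ξ) x =
      ξ (Sum.inl fun j => x j.1) + ξ (Sum.inr fun j => x j.1) := by
  simp [Tmat, Matrix.mulVec, dotProduct, Fintype.sum_sum_type,
    Matrix.fromCols, drawing, ite_mul, Finset.sum_ite_eq]

/-- Given an objective function `φ` with structure vector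
`v^φ = fun x => φ x`, there exist local information based utility functions making the game
a potential game with potential `φ` iff for every player `i` the linear system
`T_i ξ = v^φ` has a solution.  Moreover, if `ξ i = (ξ_i^1, ξ_i^2)` solves the system for
every player `i`, then `c_i x = ξ_i^1 (x_{N_i})` defines such local information based
utility functions. -/
theorem local_utility_design_iff_linear_system
    {n : ℕ} {S : Fin n → Type*} [∀ i, Fintype (S i)] [∀ i, DecidableEq (S i)]
    [∀ i, Nonempty (S i)]
    (U : Fin n → Finset (Fin n)) (hU : ∀ i, i ∉ U i)
    (φ : ((j : Fin n) → S j) → ℝ) :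
    ((∃ c : Fin n → ((j : Fin n) → S j) → ℝ,
        (∀ (i : Fin n) (x y : (j : Fin n) → S j),
            (∀ j ∈ insert i (U i), x j = y j) → c i x = c i y) ∧
        (∀ (i : Fin n) (s : (j : Fin n) → S j) (a b : S i),
            c i (Function.update s i a) - c i (Function.update s i b) =
              φ (Function.update s i a) - φ (Function.update s i b))) ↔
      ∀ i : Fin n, ∃ ξ, Tmat S U i *ᵥ ξ = fun x => φ x) ∧
    (∀ ξ : (i : Fin n) →
        ((((j : {j : Fin n // j ∈ insert i (U i)}) → S j.1) ⊕
          ((j : {j : Fin n // j ∈ Finset.univ.erase i}) → S j.1)) → ℝ),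
      (∀ i : Fin n, Tmat S U i *ᵥ ξ i = fun x => φ x) →
        ((∀ (i : Fin n) (x y : (j : Fin n) → S j),
            (∀ j ∈ insert i (U i), x j = y j) →
              ξ i (Sum.inl fun j => x j.1) = ξ i (Sum.inl fun j => y j.1)) ∧
        (∀ (i : Fin n) (s : (j : Fin n) → S j) (a b : S i),
            ξ i (Sum.inl fun j => Function.update s i a j.1) -
                ξ i (Sum.inl fun j => Function.update s i b j.1) =
              φ (Function.update s i a) - φ (Function.update s i b)))) := by
  classical
  have s₀ : (j : Fin n) → S j := fun j => Classical.arbitrary _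
  -- key facts
  have key : ∀ (i : Fin n) (ξ : (((j : {j : Fin n // j ∈ insert i (U i)}) → S j.1) ⊕
        ((j : {j : Fin n // j ∈ Finset.univ.erase i}) → S j.1)) → ℝ),
      (Tmat S U i *ᵥ ξ = fun x => φ x) →
      ∀ x, ξ (Sum.inl fun j => x j.1) + ξ (Sum.inr fun j => x j.1) = φ x := by
    intro i ξ h x
    have := congrFun h x
    rwa [Tmat_mulVec_apply] at this
  have erase_eq : ∀ (i : Fin n) (s : (j : Fin n) → S j) (a : S i),
      (fun j : {j : Fin n // j ∈ Finset.univ.erase i} => Function.update s i a j.1) =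
      (fun j : {j : Fin n // j ∈ Finset.univ.erase i} => s j.1) := by
    intro i s a
    funext j
    have hj : j.1 ≠ i := (Finset.mem_erase.mp j.2).1
    simp [Function.update_of_ne hj]
  have pot_of_sol : ∀ (i : Fin n) (ξ : (((j : {j : Fin n // j ∈ insert i (U i)}) → S j.1) ⊕
        ((j : {j : Fin n // j ∈ Finset.univ.erase i}) → S j.1)) → ℝ),
      (Tmat S U i *ᵥ ξ = fun x => φ x) →
      ∀ (s : (j : Fin n) → S j) (a b : S i),
        ξ (Sum.inl fun j => Function.update s i a j.1) -
          ξ (Sum.inl fun j => Function.update s i b j.1) =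
        φ (Function.update s i a) - φ (Function.update s i b) := by
    intro i ξ h s a b
    have ha := key i ξ h (Function.update s i a)
    have hb := key i ξ h (Function.update s i b)
    rw [erase_eq] at ha hb
    linarith
  constructor
  · constructor
    · rintro ⟨c, hloc, hpot⟩ i
      refine ⟨Sum.elim
        (fun u => c i (fun j => if h : j ∈ insert i (U i) then u ⟨j, h⟩ else s₀ j))
        (fun w => φ (fun j => if h : j ∈ Finset.univ.erase i then w ⟨j, h⟩ else s₀ j) -
          c i (fun j => if h : j ∈ Finset.univ.erase i then w ⟨j, h⟩ else s₀ j)), ?_⟩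
      funext x
      rw [Tmat_mulVec_apply]
      simp only [Sum.elim_inl, Sum.elim_inr]
      have h1 : c i (fun j => if h : j ∈ insert i (U i) then
          (fun j : {j : Fin n // j ∈ insert i (U i)} => x j.1) ⟨j, h⟩ else s₀ j) = c i x := by
        apply hloc
        intro j hj
        simp [hj]
      have hx : (fun j => if h : j ∈ Finset.univ.erase i then
          (fun j : {j : Fin n // j ∈ Finset.univ.erase i} => x j.1) ⟨j, h⟩ else s₀ j) =
          Function.update x i (s₀ i) := by
        funext j
        by_cases hj : j = i
        · subst hj; simp
        · simp [hj, Function.update_of_ne hj, Finset.mem_erase]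
      have h2 := hpot i x (s₀ i) (x i)
      rw [Function.update_eq_self] at h2
      rw [h1, hx]
      linarith
    · intro hsol
      choose ξ hξ using hsol
      refine ⟨fun i x => ξ i (Sum.inl fun j => x j.1), ?_, ?_⟩
      · intro i x y hxy
        have : (fun j : {j : Fin n // j ∈ insert i (U i)} => x j.1) =
            (fun j : {j : Fin n // j ∈ insert i (U i)} => y j.1) :=
          funext fun j => hxy j.1 j.2
        simp only []
        rw [this]
      · intro i s a b
        exact pot_of_sol i (ξ i) (hξ i) s a b
  · intro ξ hξ
    refine ⟨?_, ?_⟩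
    · intro i x y hxy
      have : (fun j : {j : Fin n // j ∈ insert i (U i)} => x j.1) =
          (fun j : {j : Fin n // j ∈ insert i (U i)} => y j.1) :=
        funext fun j => hxy j.1 j.2
      rw [this]
    · intro i s a b
      exact pot_of_sol i (ξ i) (hξ i) s a b
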